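/- For every λ ∈ (0, 2], one has ∫_{(0,∞)²} λ t₁ e^{−(t₁+t₂)} / [(1 − e^{−(t₁+t₂)})(1 + (λ−1)e^{−(t₁+t₂)})] dt₁ dt₂ = ∑_{k≥1} (1 − (1−λ)^k)/k³ (= ζ(3) − Li₃(1−λ)), the integral being finite and the series convergent. -/

import Mathlib

open Real MeasureTheory
open scoped ENNReal NNReal

private lemma int_exp16 (n : ℕ) :
    MeasureTheory.IntegrableOn (fun x : ℝ => Real.exp (-((n+1:ℝ) * x))) (Set.Ioi 0) := by
  have h := exp_neg_integrableOn_Ioi 0 (show (0:ℝ) < n+1 by positivity)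
  simpa only [neg_mul] using h

private lemma int_xexp16 (n : ℕ) :
    MeasureTheory.IntegrableOn (fun x : ℝ => x * Real.exp (-((n+1:ℝ) * x))) (Set.Ioi 0) := by
  have h := integrableOn_rpow_mul_exp_neg_mul_rpow (p := 1) (s := 1) (b := (n+1:ℝ))
    (by norm_num) one_pos (by positivity)
  simpa only [Real.rpow_one, neg_mul] using h

private lemma val_exp16 (n : ℕ) :
    ∫ x in Set.Ioi (0:ℝ), Real.exp (-((n+1:ℝ) * x)) = 1/((n:ℝ)+1) := by
  have h := Real.integral_rpow_mul_exp_neg_mul_Ioi (a := 1) (r := (n+1:ℝ))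
    one_pos (by positivity)
  norm_num [Real.Gamma_one, Real.rpow_one] at h
  simpa using h

private lemma val_xexp16 (n : ℕ) :
    ∫ x in Set.Ioi (0:ℝ), x * Real.exp (-((n+1:ℝ) * x)) = (1/((n:ℝ)+1))^2 := by
  have h := Real.integral_rpow_mul_exp_neg_mul_Ioi (a := 2) (r := (n+1:ℝ))
    two_pos (by positivity)
  norm_num [Real.Gamma_two, Real.rpow_one] at h
  rw [h, one_div, inv_pow]

private lemma summable16 {m x : ℝ} (hm : |m| ≤ 1) (hx0 : 0 ≤ x) (hx1 : x < 1) :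
    Summable (fun k : ℕ => (1 - m^(k+1)) * x^(k+1)) := by
  have h1 : Summable (fun k : ℕ => x^(k+1)) := by
    simpa only [pow_succ'] using (summable_geometric_of_lt_one hx0 hx1).mul_left x
  have hmx : ‖m * x‖ < 1 := by
    rw [Real.norm_eq_abs, abs_mul, abs_of_nonneg hx0]
    calc |m| * x ≤ 1 * x := by nlinarith [abs_nonneg m]
    _ < 1 := by linarith
  have h2 : Summable (fun k : ℕ => (m*x)^(k+1)) := by
    simpa only [pow_succ'] using (summable_geometric_of_norm_lt_one hmx).mul_left (m*x)
  refine (h1.sub h2).congr fun k => ?_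
  rw [mul_pow]; ring

private lemma tsum16 {m x : ℝ} (hm : |m| ≤ 1) (hx0 : 0 ≤ x) (hx1 : x < 1) :
    ∑' k : ℕ, (1 - m^(k+1)) * x^(k+1) = x * (1-x)⁻¹ - (m*x) * (1-m*x)⁻¹ := by
  have h1 : Summable (fun k : ℕ => x^(k+1)) := by
    simpa only [pow_succ'] using (summable_geometric_of_lt_one hx0 hx1).mul_left x
  have hmx : ‖m * x‖ < 1 := by
    rw [Real.norm_eq_abs, abs_mul, abs_of_nonneg hx0]
    calc |m| * x ≤ 1 * x := by nlinarith [abs_nonneg m]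
    _ < 1 := by linarith
  have h2 : Summable (fun k : ℕ => (m*x)^(k+1)) := by
    simpa only [pow_succ'] using (summable_geometric_of_norm_lt_one hmx).mul_left (m*x)
  have e : ∀ k : ℕ, (1 - m^(k+1)) * x^(k+1) = x^(k+1) - (m*x)^(k+1) := fun k => by
    rw [mul_pow]; ring
  rw [tsum_congr e, Summable.tsum_sub h1 h2]
  have t1 : ∑' k : ℕ, x^(k+1) = x * (1-x)⁻¹ := by
    simp only [pow_succ']
    rw [tsum_mul_left, tsum_geometric_of_lt_one hx0 hx1]
  have t2 : ∑' k : ℕ, (m*x)^(k+1) = (m*x) * (1-m*x)⁻¹ := by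
    simp only [pow_succ']
    rw [tsum_mul_left, tsum_geometric_of_norm_lt_one hmx]
  rw [t1, t2]

private lemma exp_prod16 (t : ℝ × ℝ) (k : ℕ) :
    Real.exp (-((k+1:ℝ) * t.1)) * Real.exp (-((k+1:ℝ) * t.2))
      = Real.exp (-(t.1 + t.2)) ^ (k+1) := by
  rw [← Real.exp_add, ← Real.exp_nat_mul]
  congr 1; push_cast; ring

private lemma gsummable16 {l : ℝ} (hm : |1 - l| ≤ 1) {t : ℝ × ℝ}
    (h1 : 0 < t.1) (h2 : 0 < t.2) :
    Summable (fun k : ℕ => ((1 - (1-l)^(k+1)) * (t.1 * Real.exp (-((k+1:ℝ) * t.1)))) *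
        Real.exp (-((k+1:ℝ) * t.2))) := by
  have hx1 : Real.exp (-(t.1 + t.2)) < 1 := by
    rw [Real.exp_lt_one_iff]; linarith
  refine ((summable16 hm (Real.exp_pos _).le hx1).mul_left t.1).congr fun k => ?_
  rw [← exp_prod16 t k]; ring

private lemma pointwise16 {l : ℝ} (hl0 : 0 < l) (hl2 : l ≤ 2) {t : ℝ × ℝ}
    (h1 : 0 < t.1) (h2 : 0 < t.2) :
    l * t.1 * Real.exp (-(t.1 + t.2)) /
      ((1 - Real.exp (-(t.1 + t.2))) * (1 + (l - 1) * Real.exp (-(t.1 + t.2))))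
    = ∑' k : ℕ, ((1 - (1-l)^(k+1)) * (t.1 * Real.exp (-((k+1:ℝ) * t.1)))) *
        Real.exp (-((k+1:ℝ) * t.2)) := by
  have hm : |1 - l| ≤ 1 := abs_le.2 ⟨by linarith, by linarith⟩
  set x := Real.exp (-(t.1 + t.2)) with hx
  have hx0 : 0 < x := Real.exp_pos _
  have hx1 : x < 1 := by
    rw [hx, Real.exp_lt_one_iff]; linarith
  have hmx : (1-l) * x < 1 := by
    calc (1-l) * x ≤ |(1-l) * x| := le_abs_self _
    _ = |1-l| * x := by rw [abs_mul, abs_of_nonneg hx0.le]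
    _ ≤ 1 * x := by nlinarith [abs_nonneg (1-l)]
    _ < 1 := by linarith
  have key : l * t.1 * x / ((1 - x) * (1 + (l - 1) * x))
      = t.1 * (x * (1-x)⁻¹ - ((1-l)*x) * (1-(1-l)*x)⁻¹) := by
    have hd1 : (1:ℝ) - x ≠ 0 := ne_of_gt (by linarith)
    have hd2 : (1:ℝ) - (1-l)*x ≠ 0 := ne_of_gt (by linarith)
    have hd3 : (1:ℝ) + (l-1)*x ≠ 0 := by
      have : (1:ℝ) + (l-1)*x = 1 - (1-l)*x := by ring
      rw [this]; exact hd2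
    rw [show (1:ℝ)-(1-l)*x = 1+(l-1)*x by ring, div_eq_mul_inv, mul_inv]
    have hu := mul_inv_cancel₀ hd1
    have hv := mul_inv_cancel₀ hd3
    linear_combination (t.1*x*(l*(1 + (l - 1) * x)⁻¹ - (1 + (l - 1) * x)⁻¹)) * hu + (t.1*x*(1-x)⁻¹) * hv
  rw [key, ← tsum16 hm hx0.le hx1, ← tsum_mul_left]
  refine tsum_congr fun k => ?_
  rw [← exp_prod16 t k]; ring

/-- For `λ ∈ (0,2]`,
`∫_{(0,∞)²} λ t₁ e^{−(t₁+t₂)}/[(1−e^{−(t₁+t₂)})(1+(λ−1)e^{−(t₁+t₂)})] = ∑_{k≥1} (1−(1−λ)^k)/k³`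
(`= ζ(3) − Li₃(1−λ)`), the integral being finite and the series convergent. -/
theorem statement16 (l : ℝ) (hl : l ∈ Set.Ioc (0:ℝ) 2) :
    IntegrableOn
      (fun t : ℝ × ℝ => l * t.1 * Real.exp (-(t.1 + t.2)) /
        ((1 - Real.exp (-(t.1 + t.2))) * (1 + (l - 1) * Real.exp (-(t.1 + t.2)))))
      (Set.Ioi (0:ℝ) ×ˢ Set.Ioi (0:ℝ)) ∧
    Summable (fun k : ℕ => (1 - (1 - l) ^ (k + 1)) / ((k : ℝ) + 1) ^ 3) ∧
    (∫ t : ℝ × ℝ in Set.Ioi (0:ℝ) ×ˢ Set.Ioi (0:ℝ),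
        l * t.1 * Real.exp (-(t.1 + t.2)) /
          ((1 - Real.exp (-(t.1 + t.2))) * (1 + (l - 1) * Real.exp (-(t.1 + t.2)))))
      = ∑' k : ℕ, (1 - (1 - l) ^ (k + 1)) / ((k : ℝ) + 1) ^ 3 := by
  obtain ⟨hl0, hl2⟩ := hl
  have hm : |1 - l| ≤ 1 := abs_le.2 ⟨by linarith, by linarith⟩
  set S : Set (ℝ × ℝ) := Set.Ioi (0:ℝ) ×ˢ Set.Ioi (0:ℝ) with hS
  have hSm : MeasurableSet S := measurableSet_Ioi.prod measurableSet_Ioi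
  set f : ℝ × ℝ → ℝ := fun t => l * t.1 * Real.exp (-(t.1 + t.2)) /
        ((1 - Real.exp (-(t.1 + t.2))) * (1 + (l - 1) * Real.exp (-(t.1 + t.2)))) with hf
  set g : ℕ → ℝ × ℝ → ℝ := fun k t =>
    ((1 - (1-l)^(k+1)) * (t.1 * Real.exp (-((k+1:ℝ) * t.1)))) *
        Real.exp (-((k+1:ℝ) * t.2)) with hg
  have hck0 : ∀ k : ℕ, 0 ≤ 1 - (1-l)^(k+1) := by
    intro k
    have h1 : (1-l)^(k+1) ≤ |(1-l)^(k+1)| := le_abs_self _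
    have h2 : |(1-l)^(k+1)| ≤ 1 := by
      rw [abs_pow]; exact pow_le_one₀ (abs_nonneg _) hm
    linarith
  have hck2 : ∀ k : ℕ, 1 - (1-l)^(k+1) ≤ 2 := by
    intro k
    have h1 : -((1-l)^(k+1)) ≤ |(1-l)^(k+1)| := neg_le_abs _
    have h2 : |(1-l)^(k+1)| ≤ 1 := by
      rw [abs_pow]; exact pow_le_one₀ (abs_nonneg _) hm
    linarith
  have hsummable : Summable (fun k : ℕ => (1 - (1 - l) ^ (k + 1)) / ((k : ℝ) + 1) ^ 3) := by
    have hbase : Summable (fun n : ℕ => 1 / (n : ℝ) ^ 3) :=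
      summable_one_div_nat_pow.2 (by norm_num)
    have hbase1 : Summable (fun n : ℕ => 2 * (1 / ((n : ℝ) + 1) ^ 3)) := by
      refine Summable.mul_left 2 ?_
      refine ((summable_nat_add_iff 1).2 hbase).congr fun n => ?_
      push_cast; ring
    refine Summable.of_nonneg_of_le (fun k => ?_) (fun k => ?_) hbase1
    · exact div_nonneg (hck0 k) (by positivity)
    · rw [div_eq_mul_one_div]
      exact mul_le_mul_of_nonneg_right (hck2 k) (by positivity)
  have hrestrict : (volume : Measure (ℝ × ℝ)).restrict S
      = (volume.restrict (Set.Ioi 0)).prod (volume.restrict (Set.Ioi 0)) := by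
    rw [hS, Measure.volume_eq_prod, Measure.prod_restrict]
  have hgint : ∀ k, IntegrableOn (g k) S := by
    intro k
    rw [IntegrableOn, hrestrict]
    exact ((int_xexp16 k).const_mul _).mul_prod (int_exp16 k)
  have hgval : ∀ k, ∫ t in S, g k t = (1 - (1-l)^(k+1)) / ((k:ℝ)+1)^3 := by
    intro k
    rw [hg, hS,
      Measure.volume_eq_prod ℝ ℝ,
      MeasureTheory.setIntegral_prod_mul
        (fun x : ℝ => (1 - (1-l)^(k+1)) * (x * Real.exp (-((k+1:ℝ) * x))))
        (fun y : ℝ => Real.exp (-((k+1:ℝ) * y))),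
      integral_const_mul, val_xexp16 k, val_exp16 k]
    have hk : ((k:ℝ)+1) ≠ 0 := by positivity
    field_simp
  have hgnn : ∀ k, ∀ t ∈ S, 0 ≤ g k t := by
    intro k t ht
    have h1 : 0 < t.1 := ht.1
    have hc := hck0 k
    have e1 := (Real.exp_pos (-((k+1:ℝ) * t.1))).le
    have e2 := (Real.exp_pos (-((k+1:ℝ) * t.2))).le
    rw [hg]
    positivity
  have hgmeas : ∀ k, AEStronglyMeasurable (g k) (volume.restrict S) := by
    intro k
    apply Continuous.aestronglyMeasurable
    fun_prop
  have hglint : ∀ k, ∫⁻ t in S, ‖g k t‖₊ ∂volume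
      = ENNReal.ofReal ((1 - (1-l)^(k+1)) / ((k:ℝ)+1)^3) := by
    intro k
    have hnn : 0 ≤ᵐ[volume.restrict S] (g k) := by
      filter_upwards [ae_restrict_mem hSm] with t ht using hgnn k t ht
    have step : ∫⁻ t in S, ‖g k t‖₊ ∂volume = ∫⁻ t in S, ENNReal.ofReal (g k t) ∂volume := by
      refine lintegral_congr_ae (hnn.mono fun t ht => ?_)
      exact Real.enorm_eq_ofReal ht
    rw [step, ← ofReal_integral_eq_lintegral_ofReal (hgint k) hnn, hgval k]
  have hlsum : ∑' k, ∫⁻ t in S, ‖g k t‖₊ ∂volume ≠ ⊤ := by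
    rw [tsum_congr hglint,
      ← ENNReal.ofReal_tsum_of_nonneg (fun k => div_nonneg (hck0 k) (by positivity)) hsummable]
    exact ENNReal.ofReal_ne_top
  have hfae : f =ᵐ[volume.restrict S] (fun t => ∑' k, g k t) := by
    filter_upwards [ae_restrict_mem hSm] with t ht
    exact pointwise16 hl0 hl2 ht.1 ht.2
  have hfmeas : AEStronglyMeasurable f (volume.restrict S) := by
    apply Measurable.aestronglyMeasurable
    rw [hf]
    fun_prop
  have hfint : IntegrableOn f S := by
    refine ⟨hfmeas, ?_⟩
    have heq : ∫⁻ t in S, ‖f t‖₊ ∂volume = ∫⁻ t in S, ∑' k, (‖g k t‖₊ : ℝ≥0∞) ∂volume := by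
      refine lintegral_congr_ae ?_
      filter_upwards [hfae, ae_restrict_mem hSm] with t hft ht
      have hsum := gsummable16 hm (ht.1 : (0:ℝ) < t.1) (ht.2 : (0:ℝ) < t.2)
      have h0 : 0 ≤ f t := by
        rw [hft]; exact tsum_nonneg fun k => hgnn k t ht
      change ‖f t‖ₑ = ∑' k, ‖g k t‖ₑ
      rw [Real.enorm_eq_ofReal h0, hft,
        ENNReal.ofReal_tsum_of_nonneg (fun k => hgnn k t ht) hsum]
      exact tsum_congr fun k => (Real.enorm_eq_ofReal (hgnn k t ht)).symm
    rw [HasFiniteIntegral]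
    change ∫⁻ t in S, (‖f t‖₊ : ℝ≥0∞) ∂volume < ⊤
    rw [heq,
      lintegral_tsum (f := fun k t => (‖g k t‖₊ : ℝ≥0∞)) (fun k => (hgmeas k).enorm)]
    exact hlsum.lt_top
  refine ⟨hfint, hsummable, ?_⟩
  calc ∫ t in S, f t = ∫ t in S, (∑' k, g k t) := integral_congr_ae hfae
  _ = ∑' k, ∫ t in S, g k t := integral_tsum hgmeas hlsum
  _ = ∑' k : ℕ, (1 - (1 - l) ^ (k + 1)) / ((k : ℝ) + 1) ^ 3 := tsum_congr hgval
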